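/- Let λ be a finite Borel measure on ℝ^{2n}, let J : ℝ^{2n} → ℝ^{2n} be J(x,y) = (−y,x), and let 𝓕 be the Fourier transform on L²(ℝⁿ). Then W(λ) = 𝓕⁻¹ W(J_*λ) 𝓕, where J_*λ is the pushforward of λ by J. -/

import Mathlib

/- STATEMENT 14:
Let λ be a finite Borel measure on ℝ^{2n}, let J : ℝ^{2n} → ℝ^{2n} be
J(x,y) = (−y,x), and let 𝓕 be the (unitary) Fourier transform on L²(ℝⁿ).
Then W(λ) = 𝓕⁻¹ W(J_*λ) 𝓕, where J_*λ is the pushforward of λ by J.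

W(λ) and W(J_*λ) are the bounded operators given by the Weyl-transform formula
(W(μ)φ)(t) = ∫ e^{πi(x·y+2y·t)} φ(t+x) dμ(x,y); 𝓕 is the unitary Fourier
transform, characterized on integrable L² functions by its integral formula
𝓕φ(ξ) = ∫ e^{-2πi ξ·t} φ(t) dt. -/

open MeasureTheory Complex

noncomputable section

abbrev En (n : ℕ) : Type := EuclideanSpace ℝ (Fin n)

abbrev L2 (n : ℕ) := Lp ℂ 2 (volume : Measure (En n))

local notation "⟪" x ", " y "⟫" => @inner ℝ _ _ x y

namespace Statement14Aux

variable {n : ℕ}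

/-- the map `(z, t) ↦ t + z.1` is quasi measure preserving from `μ.prod volume`. -/
lemma qmp1 (μ : Measure (En n × En n)) :
    Measure.QuasiMeasurePreserving (fun q : (En n × En n) × En n => q.2 + q.1.1)
      (μ.prod volume) volume := by
  have hm : Measurable (fun q : (En n × En n) × En n => q.2 + q.1.1) :=
    measurable_snd.add (measurable_fst.comp measurable_fst)
  refine ⟨hm, Measure.AbsolutelyContinuous.mk fun s hs h0 => ?_⟩
  rw [Measure.map_apply hm hs, Measure.prod_apply (hm hs)]
  have hz : ∀ z : En n × En n,
      volume (Prod.mk z ⁻¹' ((fun q : (En n × En n) × En n => q.2 + q.1.1) ⁻¹' s)) = 0 := by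
    intro z
    have : (Prod.mk z ⁻¹' ((fun q : (En n × En n) × En n => q.2 + q.1.1) ⁻¹' s))
        = (fun t : En n => t + z.1) ⁻¹' s := rfl
    rw [this, measure_preimage_add_right]
    exact h0
  simp [hz]

/-- the map `(t, z) ↦ t + z.1` is quasi measure preserving from `volume.prod μ`. -/
lemma qmp2 (μ : Measure (En n × En n)) [SFinite μ] :
    Measure.QuasiMeasurePreserving (fun p : En n × (En n × En n) => p.1 + p.2.1)
      (volume.prod μ) volume :=
  (qmp1 μ).comp (Measure.measurePreserving_swap).quasiMeasurePreserving

lemma int_prod (μ : Measure (En n × En n)) [IsFiniteMeasure μ] {f : En n → ℂ}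
    (hf : Integrable f volume) :
    Integrable (fun p : En n × (En n × En n) => f (p.1 + p.2.1)) (volume.prod μ) := by
  have hsm : AEStronglyMeasurable (fun q : (En n × En n) × En n => f (q.2 + q.1.1))
      (μ.prod volume) :=
    hf.aestronglyMeasurable.comp_quasiMeasurePreserving (qmp1 μ)
  have h : Integrable (fun q : (En n × En n) × En n => f (q.2 + q.1.1)) (μ.prod volume) := by
    rw [integrable_prod_iff hsm]
    constructor
    · exact Filter.Eventually.of_forall fun z => hf.comp_add_right z.1
    · have : (fun z : En n × En n => ∫ t : En n, ‖f (t + z.1)‖)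
          = fun _ => ∫ t : En n, ‖f t‖ :=
        funext fun z => integral_add_right_eq_self (fun t => ‖f t‖) z.1
      rw [this]
      exact integrable_const _
  simpa [Function.comp_def] using h.swap

lemma habsK (a b : ℝ) :
    ‖Complex.exp ((Real.pi : ℂ) * Complex.I * ((a : ℂ) + 2 * (b : ℂ)))‖ = 1 := by
  have : (Real.pi : ℂ) * Complex.I * ((a : ℂ) + 2 * (b : ℂ))
      = ((Real.pi * (a + 2 * b) : ℝ) : ℂ) * Complex.I := by
    push_cast; ring
  rw [this, Complex.norm_exp_ofReal_mul_I]

lemma habsE (r : ℝ) :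
    ‖Complex.exp (-(2 * (Real.pi : ℂ) * Complex.I * (r : ℂ)))‖ = 1 := by
  have : -(2 * (Real.pi : ℂ) * Complex.I * (r : ℂ))
      = ((-(2 * Real.pi * r) : ℝ) : ℂ) * Complex.I := by
    push_cast; ring
  rw [this, Complex.norm_exp_ofReal_mul_I]

end Statement14Aux

open Statement14Aux

set_option maxHeartbeats 2000000 in
set_option synthInstance.maxHeartbeats 400000 in
theorem statement14 (n : ℕ)
    (lam : Measure (En n × En n)) [IsFiniteMeasure lam]
    (F : L2 n ≃ₗᵢ[ℂ] L2 n)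
    (hF : ∀ φ : L2 n, Integrable (φ : En n → ℂ) (volume : Measure (En n)) →
      ∀ᵐ ξ ∂(volume : Measure (En n)),
        (F φ : En n → ℂ) ξ =
          ∫ t : En n,
            Complex.exp (-(2 * (Real.pi : ℂ) * Complex.I *
              ((@inner ℝ _ _ ξ t : ℝ) : ℂ))) * (φ : En n → ℂ) t)
    (T : L2 n →L[ℂ] L2 n)
    (hT : ∀ φ : L2 n, ∀ᵐ t ∂(volume : Measure (En n)),
      (T φ : En n → ℂ) t =
        ∫ z : En n × En n,
          Complex.exp ((Real.pi : ℂ) * Complex.I *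
              (((@inner ℝ _ _ z.1 z.2 : ℝ) : ℂ) + 2 * ((@inner ℝ _ _ z.2 t : ℝ) : ℂ)))
            * (φ : En n → ℂ) (t + z.1) ∂lam)
    (T' : L2 n →L[ℂ] L2 n)
    (hT' : ∀ φ : L2 n, ∀ᵐ t ∂(volume : Measure (En n)),
      (T' φ : En n → ℂ) t =
        ∫ z : En n × En n,
          Complex.exp ((Real.pi : ℂ) * Complex.I *
              (((@inner ℝ _ _ z.1 z.2 : ℝ) : ℂ) + 2 * ((@inner ℝ _ _ z.2 t : ℝ) : ℂ)))
            * (φ : En n → ℂ) (t + z.1)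
          ∂(Measure.map (fun w : En n × En n => (-w.2, w.1)) lam)) :
    ∀ φ : L2 n, T φ = F.symm (T' (F φ)) := by
  classical
  have hJm : Measurable (fun w : En n × En n => (-w.2, w.1)) :=
    (measurable_snd.neg).prodMk measurable_fst
  set μ' : Measure (En n × En n) :=
    Measure.map (fun w : En n × En n => (-w.2, w.1)) lam with hμ'def
  have hμ'fin : IsFiniteMeasure μ' := by
    constructor
    rw [hμ'def, Measure.map_apply hJm MeasurableSet.univ]
    exact measure_lt_top lam _
  have main : ∀ φ : L2 n, Integrable (φ : En n → ℂ) (volume : Measure (En n)) →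
      T φ = F.symm (T' (F φ)) := by
    intro φ hφ
    -- the continuous Fourier transform of φ
    set Fr : En n → ℂ := FourierTransform.fourier (φ : En n → ℂ) with hFrdef
    have hFrEq : ∀ w : En n, Fr w =
        ∫ t : En n, Complex.exp (-(2 * (Real.pi : ℂ) * Complex.I *
          ((⟪w, t⟫ : ℝ) : ℂ))) * (φ : En n → ℂ) t := by
      intro w
      rw [hFrdef, Real.fourier_eq']
      refine integral_congr_ae (Filter.Eventually.of_forall fun t => ?_)
      simp only [smul_eq_mul]
      congr 1
      rw [real_inner_comm t w]
      push_cast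
      ring_nf
    have hFrCont : Continuous Fr := by
      rw [hFrdef]
      exact VectorFourier.fourierIntegral_continuous Real.continuous_fourierChar
        (by simp only [innerₗ_apply_apply]; exact continuous_inner) hφ
    -- integrability of the Weyl integrand
    have hΦprod : Integrable (fun p : En n × (En n × En n) =>
        (φ : En n → ℂ) (p.1 + p.2.1)) (volume.prod lam) := int_prod lam hφ
    have hKcont : Continuous (fun p : En n × (En n × En n) =>
        Complex.exp ((Real.pi : ℂ) * Complex.I *
          (((⟪p.2.1, p.2.2⟫ : ℝ) : ℂ) + 2 * ((⟪p.2.2, p.1⟫ : ℝ) : ℂ)))) := by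
      have c1 : Continuous fun p : En n × (En n × En n) => (⟪p.2.1, p.2.2⟫ : ℝ) :=
        (continuous_fst.comp continuous_snd).inner (continuous_snd.comp continuous_snd)
      have c2 : Continuous fun p : En n × (En n × En n) => (⟪p.2.2, p.1⟫ : ℝ) :=
        (continuous_snd.comp continuous_snd).inner continuous_fst
      exact Complex.continuous_exp.comp (continuous_const.mul
        ((Complex.continuous_ofReal.comp c1).add
          (continuous_const.mul (Complex.continuous_ofReal.comp c2))))
    have hG : Integrable (fun p : En n × (En n × En n) =>
        Complex.exp ((Real.pi : ℂ) * Complex.I *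
          (((⟪p.2.1, p.2.2⟫ : ℝ) : ℂ) + 2 * ((⟪p.2.2, p.1⟫ : ℝ) : ℂ)))
          * (φ : En n → ℂ) (p.1 + p.2.1)) (volume.prod lam) :=
      hΦprod.bdd_mul hKcont.aestronglyMeasurable (c := 1) (Filter.Eventually.of_forall fun p => le_of_eq (habsK _ _))
    have hg : Integrable (fun t : En n => ∫ z : En n × En n,
        Complex.exp ((Real.pi : ℂ) * Complex.I *
          (((⟪z.1, z.2⟫ : ℝ) : ℂ) + 2 * ((⟪z.2, t⟫ : ℝ) : ℂ)))
          * (φ : En n → ℂ) (t + z.1) ∂lam) volume := hG.integral_prod_left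
    have hTg : ((T φ : L2 n) : En n → ℂ) =ᵐ[volume] fun t => ∫ z : En n × En n,
        Complex.exp ((Real.pi : ℂ) * Complex.I *
          (((⟪z.1, z.2⟫ : ℝ) : ℂ) + 2 * ((⟪z.2, t⟫ : ℝ) : ℂ)))
          * (φ : En n → ℂ) (t + z.1) ∂lam := hT φ
    have hTφInt : Integrable ((T φ : L2 n) : En n → ℂ) volume := hg.congr hTg.symm
    have h1 := hF (T φ) hTφInt
    have h6 := hT' (F φ)
    have hFφ : ((F φ : L2 n) : En n → ℂ) =ᵐ[volume] Fr := by
      filter_upwards [hF φ hφ] with ξ h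
      rw [h, hFrEq ξ]
    have h5 : ∀ᵐ ξ ∂(volume : Measure (En n)), ∀ᵐ z' ∂μ',
        ((F φ : L2 n) : En n → ℂ) (ξ + z'.1) = Fr (ξ + z'.1) := by
      have := (qmp2 μ').ae_eq hFφ
      exact Measure.ae_ae_of_ae_prod this
    have key : T' (F φ) = F (T φ) := by
      apply MeasureTheory.Lp.ext
      filter_upwards [h1, h6, h5] with ξ hξ1 hξ6 hξ5
      rw [hξ6, hξ1]
      -- RHS chain
      have hR1 : (∫ z' : En n × En n,
          Complex.exp ((Real.pi : ℂ) * Complex.I *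
              (((⟪z'.1, z'.2⟫ : ℝ) : ℂ) + 2 * ((⟪z'.2, ξ⟫ : ℝ) : ℂ)))
            * ((F φ : L2 n) : En n → ℂ) (ξ + z'.1) ∂μ')
          = ∫ z' : En n × En n,
          Complex.exp ((Real.pi : ℂ) * Complex.I *
              (((⟪z'.1, z'.2⟫ : ℝ) : ℂ) + 2 * ((⟪z'.2, ξ⟫ : ℝ) : ℂ)))
            * Fr (ξ + z'.1) ∂μ' := by
        refine integral_congr_ae (hξ5.mono fun z' h => ?_)
        simp only [h]
      have hgmcont : Continuous (fun z' : En n × En n =>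
          Complex.exp ((Real.pi : ℂ) * Complex.I *
              (((⟪z'.1, z'.2⟫ : ℝ) : ℂ) + 2 * ((⟪z'.2, ξ⟫ : ℝ) : ℂ)))
            * Fr (ξ + z'.1)) := by
        have c1 : Continuous fun z' : En n × En n => (⟪z'.1, z'.2⟫ : ℝ) :=
          continuous_fst.inner continuous_snd
        have c2 : Continuous fun z' : En n × En n => (⟪z'.2, ξ⟫ : ℝ) :=
          continuous_snd.inner continuous_const
        have cF : Continuous (fun z' : En n × En n => Fr (ξ + z'.1)) :=
          hFrCont.comp (continuous_const.add continuous_fst)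
        exact (Complex.continuous_exp.comp (continuous_const.mul
          ((Complex.continuous_ofReal.comp c1).add
            (continuous_const.mul (Complex.continuous_ofReal.comp c2))))).mul cF
      have hR2 : (∫ z' : En n × En n,
          Complex.exp ((Real.pi : ℂ) * Complex.I *
              (((⟪z'.1, z'.2⟫ : ℝ) : ℂ) + 2 * ((⟪z'.2, ξ⟫ : ℝ) : ℂ)))
            * Fr (ξ + z'.1) ∂μ')
          = ∫ z : En n × En n,
          Complex.exp ((Real.pi : ℂ) * Complex.I *
              (((⟪(-z.2 : En n), z.1⟫ : ℝ) : ℂ) + 2 * ((⟪z.1, ξ⟫ : ℝ) : ℂ)))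
            * Fr (ξ + -z.2) ∂lam := by
        rw [hμ'def]
        exact integral_map hJm.aemeasurable hgmcont.aestronglyMeasurable
      rw [hR1, hR2]
      -- LHS chain
      have hL1 : (∫ t : En n, Complex.exp (-(2 * (Real.pi : ℂ) * Complex.I *
            ((⟪ξ, t⟫ : ℝ) : ℂ))) * ((T φ : L2 n) : En n → ℂ) t)
          = ∫ t : En n, Complex.exp (-(2 * (Real.pi : ℂ) * Complex.I *
            ((⟪ξ, t⟫ : ℝ) : ℂ))) * (∫ z : En n × En n,
              Complex.exp ((Real.pi : ℂ) * Complex.I *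
                (((⟪z.1, z.2⟫ : ℝ) : ℂ) + 2 * ((⟪z.2, t⟫ : ℝ) : ℂ)))
                * (φ : En n → ℂ) (t + z.1) ∂lam) := by
        refine integral_congr_ae (hTg.mono fun t h => ?_)
        simp only [h]
      have hint : Integrable (Function.uncurry fun (t : En n) (z : En n × En n) =>
          Complex.exp (-(2 * (Real.pi : ℂ) * Complex.I * ((⟪ξ, t⟫ : ℝ) : ℂ)))
            * (Complex.exp ((Real.pi : ℂ) * Complex.I *
                (((⟪z.1, z.2⟫ : ℝ) : ℂ) + 2 * ((⟪z.2, t⟫ : ℝ) : ℂ)))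
              * (φ : En n → ℂ) (t + z.1))) (volume.prod lam) := by
        have hEKcont : Continuous (fun p : En n × (En n × En n) =>
            Complex.exp (-(2 * (Real.pi : ℂ) * Complex.I * ((⟪ξ, p.1⟫ : ℝ) : ℂ)))
              * Complex.exp ((Real.pi : ℂ) * Complex.I *
                  (((⟪p.2.1, p.2.2⟫ : ℝ) : ℂ) + 2 * ((⟪p.2.2, p.1⟫ : ℝ) : ℂ)))) := by
          have c0 : Continuous fun p : En n × (En n × En n) => (⟪ξ, p.1⟫ : ℝ) :=
            continuous_const.inner continuous_fst
          have c1 : Continuous fun p : En n × (En n × En n) => (⟪p.2.1, p.2.2⟫ : ℝ) :=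
            (continuous_fst.comp continuous_snd).inner (continuous_snd.comp continuous_snd)
          have c2 : Continuous fun p : En n × (En n × En n) => (⟪p.2.2, p.1⟫ : ℝ) :=
            (continuous_snd.comp continuous_snd).inner continuous_fst
          exact (Complex.continuous_exp.comp
              ((continuous_const.mul (Complex.continuous_ofReal.comp c0)).neg)).mul
            (Complex.continuous_exp.comp (continuous_const.mul
              ((Complex.continuous_ofReal.comp c1).add
                (continuous_const.mul (Complex.continuous_ofReal.comp c2)))))
        have h := hΦprod.bdd_mul hEKcont.aestronglyMeasurable
          (c := 1) (Filter.Eventually.of_forall fun p => by rw [norm_mul, habsE, habsK, mul_one])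
        simpa [Function.uncurry_def, mul_assoc] using h
      have hL2 : (∫ t : En n, Complex.exp (-(2 * (Real.pi : ℂ) * Complex.I *
            ((⟪ξ, t⟫ : ℝ) : ℂ))) * (∫ z : En n × En n,
              Complex.exp ((Real.pi : ℂ) * Complex.I *
                (((⟪z.1, z.2⟫ : ℝ) : ℂ) + 2 * ((⟪z.2, t⟫ : ℝ) : ℂ)))
                * (φ : En n → ℂ) (t + z.1) ∂lam))
          = ∫ z : En n × En n, (∫ t : En n,
              Complex.exp (-(2 * (Real.pi : ℂ) * Complex.I * ((⟪ξ, t⟫ : ℝ) : ℂ)))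
                * (Complex.exp ((Real.pi : ℂ) * Complex.I *
                    (((⟪z.1, z.2⟫ : ℝ) : ℂ) + 2 * ((⟪z.2, t⟫ : ℝ) : ℂ)))
                  * (φ : En n → ℂ) (t + z.1))) ∂lam := by
        rw [← integral_integral_swap hint]
        refine integral_congr_ae (Filter.Eventually.of_forall fun t => ?_)
        exact (integral_const_mul _ _).symm
      have hL3 : ∀ z : En n × En n, (∫ t : En n,
            Complex.exp (-(2 * (Real.pi : ℂ) * Complex.I * ((⟪ξ, t⟫ : ℝ) : ℂ)))
              * (Complex.exp ((Real.pi : ℂ) * Complex.I *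
                  (((⟪z.1, z.2⟫ : ℝ) : ℂ) + 2 * ((⟪z.2, t⟫ : ℝ) : ℂ)))
                * (φ : En n → ℂ) (t + z.1)))
          = Complex.exp ((Real.pi : ℂ) * Complex.I *
              (((⟪(-z.2 : En n), z.1⟫ : ℝ) : ℂ) + 2 * ((⟪z.1, ξ⟫ : ℝ) : ℂ)))
            * Fr (ξ + -z.2) := by
        intro z
        have hpt : ∀ t : En n,
            Complex.exp (-(2 * (Real.pi : ℂ) * Complex.I * ((⟪ξ, t⟫ : ℝ) : ℂ)))
              * (Complex.exp ((Real.pi : ℂ) * Complex.I *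
                  (((⟪z.1, z.2⟫ : ℝ) : ℂ) + 2 * ((⟪z.2, t⟫ : ℝ) : ℂ)))
                * (φ : En n → ℂ) (t + z.1))
            = (fun s : En n => Complex.exp ((Real.pi : ℂ) * Complex.I *
                  (((⟪(-z.2 : En n), z.1⟫ : ℝ) : ℂ) + 2 * ((⟪z.1, ξ⟫ : ℝ) : ℂ)))
                * (Complex.exp (-(2 * (Real.pi : ℂ) * Complex.I *
                    ((⟪ξ + -z.2, s⟫ : ℝ) : ℂ))) * (φ : En n → ℂ) s)) (t + z.1) := by
          intro t
          simp only
          rw [← mul_assoc, ← mul_assoc]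
          congr 1
          rw [← Complex.exp_add, ← Complex.exp_add]
          congr 1
          have e1 : (⟪ξ + -z.2, t + z.1⟫ : ℝ)
              = (⟪ξ, t⟫ : ℝ) + (⟪ξ, z.1⟫ : ℝ) - (⟪z.2, t⟫ : ℝ) - (⟪z.2, z.1⟫ : ℝ) := by
            simp [inner_add_left, inner_add_right, inner_neg_left]
            ring_nf
          have e2 : (⟪(-z.2 : En n), z.1⟫ : ℝ) = -(⟪z.2, z.1⟫ : ℝ) := by
            simp [inner_neg_left]
          have e3 : (⟪z.1, ξ⟫ : ℝ) = (⟪ξ, z.1⟫ : ℝ) := real_inner_comm _ _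
          have e4 : (⟪z.1, z.2⟫ : ℝ) = (⟪z.2, z.1⟫ : ℝ) := real_inner_comm _ _
          rw [e1, e2, e3, e4]
          push_cast
          ring
        calc (∫ t : En n,
            Complex.exp (-(2 * (Real.pi : ℂ) * Complex.I * ((⟪ξ, t⟫ : ℝ) : ℂ)))
              * (Complex.exp ((Real.pi : ℂ) * Complex.I *
                  (((⟪z.1, z.2⟫ : ℝ) : ℂ) + 2 * ((⟪z.2, t⟫ : ℝ) : ℂ)))
                * (φ : En n → ℂ) (t + z.1)))
            = ∫ t : En n, (fun s : En n => Complex.exp ((Real.pi : ℂ) * Complex.I *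
                  (((⟪(-z.2 : En n), z.1⟫ : ℝ) : ℂ) + 2 * ((⟪z.1, ξ⟫ : ℝ) : ℂ)))
                * (Complex.exp (-(2 * (Real.pi : ℂ) * Complex.I *
                    ((⟪ξ + -z.2, s⟫ : ℝ) : ℂ))) * (φ : En n → ℂ) s)) (t + z.1) :=
              integral_congr_ae (Filter.Eventually.of_forall hpt)
          _ = ∫ s : En n, Complex.exp ((Real.pi : ℂ) * Complex.I *
                  (((⟪(-z.2 : En n), z.1⟫ : ℝ) : ℂ) + 2 * ((⟪z.1, ξ⟫ : ℝ) : ℂ)))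
                * (Complex.exp (-(2 * (Real.pi : ℂ) * Complex.I *
                    ((⟪ξ + -z.2, s⟫ : ℝ) : ℂ))) * (φ : En n → ℂ) s) :=
              MeasureTheory.integral_add_right_eq_self
                (fun s : En n => Complex.exp ((Real.pi : ℂ) * Complex.I *
                  (((⟪(-z.2 : En n), z.1⟫ : ℝ) : ℂ) + 2 * ((⟪z.1, ξ⟫ : ℝ) : ℂ)))
                * (Complex.exp (-(2 * (Real.pi : ℂ) * Complex.I *
                    ((⟪ξ + -z.2, s⟫ : ℝ) : ℂ))) * (φ : En n → ℂ) s)) z.1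
          _ = Complex.exp ((Real.pi : ℂ) * Complex.I *
                  (((⟪(-z.2 : En n), z.1⟫ : ℝ) : ℂ) + 2 * ((⟪z.1, ξ⟫ : ℝ) : ℂ)))
                * ∫ s : En n, Complex.exp (-(2 * (Real.pi : ℂ) * Complex.I *
                    ((⟪ξ + -z.2, s⟫ : ℝ) : ℂ))) * (φ : En n → ℂ) s :=
              integral_const_mul _ _
          _ = Complex.exp ((Real.pi : ℂ) * Complex.I *
                  (((⟪(-z.2 : En n), z.1⟫ : ℝ) : ℂ) + 2 * ((⟪z.1, ξ⟫ : ℝ) : ℂ)))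
                * Fr (ξ + -z.2) := by rw [hFrEq (ξ + -z.2)]
      rw [hL1, hL2]
      exact (integral_congr_ae (Filter.Eventually.of_forall fun z => hL3 z)).symm ▸ rfl
    rw [key]
    exact (F.symm_apply_apply (T φ)).symm
  -- density argument
  intro φ
  have hclosed : IsClosed {ψ : L2 n | T ψ = F.symm (T' (F ψ))} := by
    apply isClosed_eq T.continuous
    exact F.symm.continuous.comp (T'.continuous.comp F.continuous)
  refine (MeasureTheory.Lp.simpleFunc.denseRange (E := ℂ) (p := (2 : ENNReal))
    (μ := (volume : Measure (En n))) (by norm_num)).induction_on φ hclosed ?_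
  intro s
  apply main
  have h1 := MeasureTheory.Lp.simpleFunc.memLp s
  have h2 : Integrable (⇑(MeasureTheory.Lp.simpleFunc.toSimpleFunc s)) volume :=
    (MeasureTheory.SimpleFunc.memLp_iff_integrable two_ne_zero (by norm_num)).mp h1
  exact h2.congr (MeasureTheory.Lp.simpleFunc.toSimpleFunc_eq_toFun s)

end
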